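/- Let ω > 0, α > 0, r₀ = ‖ℓ − x₀‖ > 0, and let ψ₀ ∈ ℝ be such that x₀ − ℓ = r₀(cos ψ₀, sin ψ₀). Define the outward spiral input u_spi(s) = r₀ e^{αs} ( ω(−sin(ωs + ψ₀), cos(ωs + ψ₀)) + α(cos(ωs + ψ₀), sin(ωs + ψ₀)) ), so that x(s) = ℓ + r₀ e^{αs}(cos(ωs + ψ₀), sin(ωs + ψ₀)) and in particular x(s) ≠ ℓ for all s. Then: (i) u_spi is a weakly persistent input trajectory of the bearing-only system at x₀; and (ii) for every T > 0, the Observability Grammian C(t,T) = ∫_{t−T}^{t} Dh(x(s))ᵀ Dh(x(s)) ds (where Dh(x) is the Jacobian matrix of h at x ≠ ℓ) satisfies ‖C(t,T)‖ → 0 as t → ∞. -/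

import Mathlib

open MeasureTheory Metric Set Filter Classical
open scoped RealInnerProductSpace

/-- The plane `ℝ²` with the Euclidean norm. -/
abbrev Pt := EuclideanSpace ℝ (Fin 2)

/-- The vector `(a, b) ∈ ℝ²`. -/
noncomputable def vec2 (a b : ℝ) : Pt := (WithLp.equiv 2 (Fin 2 → ℝ)).symm ![a, b]

/-- Bearing measurement towards the beacon `ℓ`: `h(z) = (ℓ−z)/‖ℓ−z‖` for `z ≠ ℓ`
(with the convention `h(ℓ) = 0`). -/
noncomputable def bearing (ℓ z : Pt) : Pt := if z = ℓ then 0 else ‖ℓ - z‖⁻¹ • (ℓ - z)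

/-- Flow of the single-integrator dynamics `ẋ = u`:
`φ(s;t₁,ξ,u) = ξ + ∫_{t₁}^{s} u(τ)dτ`. -/
noncomputable def flow2 (u : ℝ → Pt) (s t₁ : ℝ) (ξ : Pt) : Pt := ξ + ∫ τ in t₁..s, u τ

/-- Cumulative output error of the bearing-only system. -/
noncomputable def cumError2 (ℓ : Pt) (u : ℝ → Pt) (t₁ t₂ : ℝ) (ξ₁ ξ₂ : Pt) : ℝ :=
  ∫ s in t₁..t₂, ‖bearing ℓ (flow2 u s t₁ ξ₁) - bearing ℓ (flow2 u s t₁ ξ₂)‖ ^ 2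

/-- A `𝒦`-function: continuous, strictly increasing on `[0,∞)`, vanishing at `0`. -/
def IsKFunction (κ : ℝ → ℝ) : Prop :=
  ContinuousOn κ (Set.Ici 0) ∧ StrictMonoOn κ (Set.Ici 0) ∧ κ 0 = 0

/-- Weakly persistent input trajectory at `x₀` for the bearing-only system. -/
def WeaklyPersistentAt2 (ℓ : Pt) (u : ℝ → Pt) (x₀ : Pt) : Prop :=
  ∃ T > (0 : ℝ), ∀ t ≥ T, ∃ R > (0 : ℝ), ∃ κ : ℝ → ℝ, IsKFunction κ ∧
    ∀ ξ₁ ∈ Metric.closedBall (flow2 u (t - T) 0 x₀) R,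
      ∀ ξ₂ ∈ Metric.closedBall (flow2 u (t - T) 0 x₀) R,
        κ ‖ξ₁ - ξ₂‖ ≤ cumError2 ℓ u (t - T) t ξ₁ ξ₂

/-- Observability Grammian of the bearing-only system on `[t−T,t]`:
`C(t,T) = ∫_{t−T}^{t} Dh(x(s))ᵀ Dh(x(s)) ds`, represented as the operator
`∫_{t−T}^{t} (d(bearing ℓ)(x s))* ∘ d(bearing ℓ)(x s) ds` on `ℝ²`. -/
noncomputable def gram2 (ℓ : Pt) (u : ℝ → Pt) (x₀ : Pt) (t T : ℝ) : Pt →L[ℝ] Pt :=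
  ∫ s in (t - T)..t,
    (ContinuousLinearMap.adjoint (fderiv ℝ (bearing ℓ) (flow2 u s 0 x₀))).comp
      (fderiv ℝ (bearing ℓ) (flow2 u s 0 x₀))

lemma vec2_smul (r a b : ℝ) : r • vec2 a b = vec2 (r*a) (r*b) := by
  ext i; fin_cases i <;> rfl
lemma vec2_add (a b c d : ℝ) : vec2 a b + vec2 c d = vec2 (a+c) (b+d) := by
  ext i; fin_cases i <;> rfl
lemma vec2_decomp (a b : ℝ) : vec2 a b = a • vec2 1 0 + b • vec2 0 1 := by
  rw [vec2_smul, vec2_smul, vec2_add]; ring_nf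

lemma hasDerivAt_vec2 {f g : ℝ → ℝ} {f' g' : ℝ} {s : ℝ} (hf : HasDerivAt f f' s)
    (hg : HasDerivAt g g' s) : HasDerivAt (fun τ => vec2 (f τ) (g τ)) (vec2 f' g') s := by
  have : (fun τ => vec2 (f τ) (g τ)) = fun τ => f τ • vec2 1 0 + g τ • vec2 0 1 := by
    funext τ; exact vec2_decomp _ _
  rw [this, vec2_decomp f' g']
  exact (hf.smul_const _).add (hg.smul_const _)

lemma continuous_vec2 {f g : ℝ → ℝ} (hf : Continuous f) (hg : Continuous g) :
    Continuous (fun τ => vec2 (f τ) (g τ)) := by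
  have : (fun τ => vec2 (f τ) (g τ)) = fun τ => f τ • vec2 1 0 + g τ • vec2 0 1 := by
    funext τ; exact vec2_decomp _ _
  rw [this]; exact ((hf.smul continuous_const).add (hg.smul continuous_const))

noncomputable def spir (ω α r₀ ψ₀ : ℝ) (s : ℝ) : Pt :=
  vec2 (r₀ * Real.exp (α * s) * Real.cos (ω * s + ψ₀))
       (r₀ * Real.exp (α * s) * Real.sin (ω * s + ψ₀))

noncomputable def uspi (ω α r₀ ψ₀ : ℝ) (τ : ℝ) : Pt :=
  (r₀ * Real.exp (α * τ)) •
      (ω • vec2 (-Real.sin (ω * τ + ψ₀)) (Real.cos (ω * τ + ψ₀)) +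
        α • vec2 (Real.cos (ω * τ + ψ₀)) (Real.sin (ω * τ + ψ₀)))

lemma uspi_eq (ω α r₀ ψ₀ τ : ℝ) : uspi ω α r₀ ψ₀ τ =
    vec2 (r₀ * Real.exp (α * τ) * (α * Real.cos (ω * τ + ψ₀) - ω * Real.sin (ω * τ + ψ₀)))
         (r₀ * Real.exp (α * τ) * (α * Real.sin (ω * τ + ψ₀) + ω * Real.cos (ω * τ + ψ₀))) := by
  rw [uspi, vec2_smul, vec2_smul, vec2_add, vec2_smul]
  ring_nf

lemma hasDerivAt_comp_scalar {c d s : ℝ} {h : ℝ → ℝ} {h' : ℝ}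
    (H : HasDerivAt h h' (c * s + d)) :
    HasDerivAt (fun τ => h (c * τ + d)) (h' * c) s := by
  have := H.comp s (((hasDerivAt_id s).const_mul c).add_const d)
  exact this.congr_deriv (by ring)

lemma hasDerivAt_spir (ω α r₀ ψ₀ s : ℝ) :
    HasDerivAt (spir ω α r₀ ψ₀) (uspi ω α r₀ ψ₀ s) s := by
  rw [uspi_eq]
  apply hasDerivAt_vec2
  · have h1 : HasDerivAt (fun τ => r₀ * Real.exp (α * τ)) (r₀ * (Real.exp (α * s) * α)) s := by
      have : HasDerivAt (fun τ => Real.exp (α * τ)) (Real.exp (α * s) * α) s := by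
        simpa using hasDerivAt_comp_scalar (h := Real.exp) (c := α) (d := 0)
          (by simpa using Real.hasDerivAt_exp (α * s))
      exact this.const_mul r₀
    have h2 : HasDerivAt (fun τ => Real.cos (ω * τ + ψ₀)) (-Real.sin (ω * s + ψ₀) * ω) s :=
      hasDerivAt_comp_scalar (Real.hasDerivAt_cos _)
    have := h1.mul h2
    exact this.congr_deriv (by ring)
  · have h1 : HasDerivAt (fun τ => r₀ * Real.exp (α * τ)) (r₀ * (Real.exp (α * s) * α)) s := by
      have : HasDerivAt (fun τ => Real.exp (α * τ)) (Real.exp (α * s) * α) s := by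
        simpa using hasDerivAt_comp_scalar (h := Real.exp) (c := α) (d := 0)
          (by simpa using Real.hasDerivAt_exp (α * s))
      exact this.const_mul r₀
    have h2 : HasDerivAt (fun τ => Real.sin (ω * τ + ψ₀)) (Real.cos (ω * s + ψ₀) * ω) s :=
      hasDerivAt_comp_scalar (Real.hasDerivAt_sin _)
    have := h1.mul h2
    exact this.congr_deriv (by ring)

lemma continuous_uspi (ω α r₀ ψ₀ : ℝ) : Continuous (uspi ω α r₀ ψ₀) := by
  have : uspi ω α r₀ ψ₀ = fun τ =>
    vec2 (r₀ * Real.exp (α * τ) * (α * Real.cos (ω * τ + ψ₀) - ω * Real.sin (ω * τ + ψ₀)))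
         (r₀ * Real.exp (α * τ) * (α * Real.sin (ω * τ + ψ₀) + ω * Real.cos (ω * τ + ψ₀))) := by
    funext τ; exact uspi_eq ω α r₀ ψ₀ τ
  rw [this]
  apply continuous_vec2 <;> fun_prop

lemma integral_uspi (ω α r₀ ψ₀ a s : ℝ) :
    (∫ τ in a..s, uspi ω α r₀ ψ₀ τ) = spir ω α r₀ ψ₀ s - spir ω α r₀ ψ₀ a :=
  intervalIntegral.integral_eq_sub_of_hasDerivAt (fun τ _ => hasDerivAt_spir ω α r₀ ψ₀ τ)
    ((continuous_uspi ω α r₀ ψ₀).intervalIntegrable _ _)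


lemma unit_lip {w₁ w₂ : Pt} {r : ℝ} (hr : 0 < r) (h1 : r ≤ ‖w₁‖) (h2 : r ≤ ‖w₂‖) :
    ‖‖w₁‖⁻¹ • w₁ - ‖w₂‖⁻¹ • w₂‖ ≤ 2 / r * ‖w₁ - w₂‖ := by
  have hw1 : (0:ℝ) < ‖w₁‖ := lt_of_lt_of_le hr h1
  have hw2 : (0:ℝ) < ‖w₂‖ := lt_of_lt_of_le hr h2
  have key : ‖w₁‖⁻¹ • w₁ - ‖w₂‖⁻¹ • w₂
      = ‖w₁‖⁻¹ • (w₁ - w₂) + (‖w₁‖⁻¹ - ‖w₂‖⁻¹) • w₂ := by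
    rw [smul_sub, sub_smul]; abel
  rw [key]
  have e1 : ‖‖w₁‖⁻¹ • (w₁ - w₂)‖ ≤ ‖w₁ - w₂‖ / r := by
    rw [norm_smul, norm_inv, norm_norm, div_eq_inv_mul]
    gcongr
  have e2 : ‖(‖w₁‖⁻¹ - ‖w₂‖⁻¹) • w₂‖ ≤ ‖w₁ - w₂‖ / r := by
    rw [norm_smul, Real.norm_eq_abs]
    have h3 : ‖w₁‖⁻¹ - ‖w₂‖⁻¹ = (‖w₂‖ - ‖w₁‖) / (‖w₁‖ * ‖w₂‖) := by field_simp
    rw [h3, abs_div, abs_of_pos (mul_pos hw1 hw2), div_mul_eq_mul_div]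
    have habs : |‖w₂‖ - ‖w₁‖| ≤ ‖w₁ - w₂‖ :=
      (abs_norm_sub_norm_le w₂ w₁).trans (le_of_eq (norm_sub_rev _ _))
    calc |‖w₂‖ - ‖w₁‖| * ‖w₂‖ / (‖w₁‖ * ‖w₂‖)
        = |‖w₂‖ - ‖w₁‖| / ‖w₁‖ := by field_simp
      _ ≤ ‖w₁ - w₂‖ / r := by
          apply div_le_div₀ (norm_nonneg _) habs hr h1
  calc ‖‖w₁‖⁻¹ • (w₁ - w₂) + (‖w₁‖⁻¹ - ‖w₂‖⁻¹) • w₂‖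
      ≤ ‖‖w₁‖⁻¹ • (w₁ - w₂)‖ + ‖(‖w₁‖⁻¹ - ‖w₂‖⁻¹) • w₂‖ := norm_add_le _ _
    _ ≤ ‖w₁ - w₂‖ / r + ‖w₁ - w₂‖ / r := add_le_add e1 e2
    _ = 2 / r * ‖w₁ - w₂‖ := by ring

lemma bearing_lip {ℓ z₁ z₂ : Pt} {r : ℝ} (hr : 0 < r) (h1 : r ≤ ‖ℓ - z₁‖) (h2 : r ≤ ‖ℓ - z₂‖) :
    ‖bearing ℓ z₁ - bearing ℓ z₂‖ ≤ 2 / r * ‖z₁ - z₂‖ := by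
  have hz1 : z₁ ≠ ℓ := by rintro rfl; simp at h1; linarith
  have hz2 : z₂ ≠ ℓ := by rintro rfl; simp at h2; linarith
  rw [bearing, bearing, if_neg hz1, if_neg hz2]
  have := unit_lip hr h1 h2
  have hid : (ℓ - z₁) - (ℓ - z₂) = -(z₁ - z₂) := by abel
  rw [hid, norm_neg] at this
  exact this

lemma norm_bearing_le (ℓ z : Pt) : ‖bearing ℓ z‖ ≤ 1 := by
  rw [bearing]
  split_ifs with h
  · simp
  · rw [norm_smul, norm_inv, norm_norm]
    have : ‖ℓ - z‖ ≠ 0 := by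
      simp only [norm_ne_zero_iff, sub_ne_zero]
      exact fun hh => h hh.symm
    rw [inv_mul_cancel₀ this]

lemma norm_fderiv_bearing_le {ℓ z : Pt} (hz : z ≠ ℓ) :
    ‖fderiv ℝ (bearing ℓ) z‖ ≤ 4 / ‖ℓ - z‖ := by
  set ρ := ‖ℓ - z‖ with hρdef
  have hρ : 0 < ρ := by
    rw [hρdef, norm_pos_iff, sub_ne_zero]
    exact fun hh => hz hh.symm
  have hmem : {z' : Pt | ρ / 2 ≤ ‖ℓ - z'‖} ∈ nhds z := by
    have hopen : Metric.ball z (ρ / 2) ⊆ {z' : Pt | ρ / 2 ≤ ‖ℓ - z'‖} := by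
      intro z' hz'
      rw [Metric.mem_ball, dist_eq_norm] at hz'
      simp only [Set.mem_setOf_eq]
      have h1 : ‖ℓ - z‖ ≤ ‖ℓ - z'‖ + ‖z' - z‖ := by
        calc ‖ℓ - z‖ = ‖(ℓ - z') + (z' - z)‖ := by congr 1; abel
          _ ≤ ‖ℓ - z'‖ + ‖z' - z‖ := norm_add_le _ _
      linarith
    exact Filter.mem_of_superset (Metric.ball_mem_nhds z (by linarith)) hopen
  have hlip : LipschitzOnWith (Real.toNNReal (4 / ρ)) (bearing ℓ) {z' : Pt | ρ / 2 ≤ ‖ℓ - z'‖} := by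
    rw [lipschitzOnWith_iff_dist_le_mul]
    intro x hx y hy
    rw [dist_eq_norm, dist_eq_norm, Real.coe_toNNReal _ (by positivity)]
    have := bearing_lip (r := ρ / 2) (by linarith) hx hy
    calc ‖bearing ℓ x - bearing ℓ y‖ ≤ 2 / (ρ / 2) * ‖x - y‖ := this
      _ = 4 / ρ * ‖x - y‖ := by rw [div_div_eq_mul_div]; norm_num
  have := norm_fderiv_le_of_lipschitzOn ℝ hmem hlip
  calc ‖fderiv ℝ (bearing ℓ) z‖ ≤ ↑(Real.toNNReal (4 / ρ)) := this
    _ = 4 / ρ := Real.coe_toNNReal _ (by positivity)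


section
variable (ℓ x₀ : Pt) (ω α r₀ ψ₀ : ℝ)

lemma norm_vec2 (a b : ℝ) : ‖vec2 a b‖ = Real.sqrt (a^2 + b^2) := by
  rw [EuclideanSpace.norm_eq, Fin.sum_univ_two]
  simp [vec2, sq_abs]

lemma norm_spir (hr₀pos : 0 < r₀) (s : ℝ) :
    ‖spir ω α r₀ ψ₀ s‖ = r₀ * Real.exp (α * s) := by
  rw [spir, norm_vec2]
  have h : (r₀ * Real.exp (α * s) * Real.cos (ω * s + ψ₀)) ^ 2 +
      (r₀ * Real.exp (α * s) * Real.sin (ω * s + ψ₀)) ^ 2 = (r₀ * Real.exp (α * s))^2 := by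
    have := Real.sin_sq_add_cos_sq (ω * s + ψ₀)
    nlinarith [this]
  rw [h, Real.sqrt_sq (by positivity)]

lemma flow_uspi (s a : ℝ) (ξ : Pt) :
    flow2 (uspi ω α r₀ ψ₀) s a ξ = ξ + (spir ω α r₀ ψ₀ s - spir ω α r₀ ψ₀ a) := by
  rw [flow2, integral_uspi]

lemma x0_eq (hψ₀ : x₀ - ℓ = r₀ • vec2 (Real.cos ψ₀) (Real.sin ψ₀)) :
    x₀ = ℓ + spir ω α r₀ ψ₀ 0 := by
  have : spir ω α r₀ ψ₀ 0 = r₀ • vec2 (Real.cos ψ₀) (Real.sin ψ₀) := by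
    rw [spir, vec2_smul]
    norm_num
  rw [this, ← hψ₀]
  abel

lemma flow_uspi_x0 (hψ₀ : x₀ - ℓ = r₀ • vec2 (Real.cos ψ₀) (Real.sin ψ₀)) (s : ℝ) :
    flow2 (uspi ω α r₀ ψ₀) s 0 x₀ = ℓ + spir ω α r₀ ψ₀ s := by
  rw [flow_uspi, x0_eq ℓ x₀ ω α r₀ ψ₀ hψ₀]
  abel

lemma part3 (hα : 0 < α) (hr₀pos : 0 < r₀)
    (hψ₀ : x₀ - ℓ = r₀ • vec2 (Real.cos ψ₀) (Real.sin ψ₀)) (T : ℝ) (hT : 0 < T) :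
    Tendsto (fun t => ‖gram2 ℓ (uspi ω α r₀ ψ₀) x₀ t T‖) atTop (nhds 0) := by
  set u := uspi ω α r₀ ψ₀
  have hbound : ∀ t : ℝ, ‖gram2 ℓ u x₀ t T‖ ≤
      16 * T / r₀ ^ 2 * ((Real.exp (α * (t - T)))⁻¹ * (Real.exp (α * (t - T)))⁻¹) := by
    intro t
    have key : ∀ s ∈ Set.uIoc (t - T) t,
        ‖(ContinuousLinearMap.adjoint (fderiv ℝ (bearing ℓ) (flow2 u s 0 x₀))).comp
          (fderiv ℝ (bearing ℓ) (flow2 u s 0 x₀))‖ ≤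
        (4 / (r₀ * Real.exp (α * (t - T)))) ^ 2 := by
      intro s hs
      rw [Set.uIoc_of_le (by linarith)] at hs
      have hflow : flow2 u s 0 x₀ = ℓ + spir ω α r₀ ψ₀ s := flow_uspi_x0 ℓ x₀ ω α r₀ ψ₀ hψ₀ s
      have hρ : ‖ℓ - flow2 u s 0 x₀‖ = r₀ * Real.exp (α * s) := by
        rw [hflow]
        have : ℓ - (ℓ + spir ω α r₀ ψ₀ s) = -(spir ω α r₀ ψ₀ s) := by abel
        rw [this, norm_neg, norm_spir ω α r₀ ψ₀ hr₀pos]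
      have hne : flow2 u s 0 x₀ ≠ ℓ := by
        intro h
        rw [h] at hρ
        simp at hρ
        nlinarith [Real.exp_pos (α * s)]
      have hD := norm_fderiv_bearing_le hne
      rw [hρ] at hD
      have hD2 : ‖fderiv ℝ (bearing ℓ) (flow2 u s 0 x₀)‖ ≤ 4 / (r₀ * Real.exp (α * (t - T))) := by
        refine hD.trans ?_
        apply div_le_div_of_nonneg_left (by norm_num) (by positivity)
        have : Real.exp (α * (t - T)) ≤ Real.exp (α * s) :=
          Real.exp_le_exp.2 (by nlinarith [hs.1])
        nlinarith
      rw [ContinuousLinearMap.norm_adjoint_comp_self]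
      rw [sq]
      have h0 : (0:ℝ) ≤ ‖fderiv ℝ (bearing ℓ) (flow2 u s 0 x₀)‖ := norm_nonneg _
      exact mul_le_mul hD2 hD2 h0 (by positivity)
    have := intervalIntegral.norm_integral_le_of_norm_le_const key
    rw [gram2]
    refine this.trans (le_of_eq ?_)
    have habs : |t - (t - T)| = T := by rw [abs_of_nonneg (by linarith)]; ring
    rw [habs]
    field_simp
    ring
  apply squeeze_zero (fun t => norm_nonneg _) hbound
  have h1 : Tendsto (fun t : ℝ => Real.exp (α * (t - T))) atTop atTop := by
    apply Real.tendsto_exp_atTop.comp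
    apply Tendsto.const_mul_atTop hα
    exact tendsto_atTop_add_const_right atTop (-T) tendsto_id
  have h2 : Tendsto (fun t : ℝ => (Real.exp (α * (t - T)))⁻¹) atTop (nhds 0) :=
    h1.inv_tendsto_atTop
  have h3 := ((h2.mul h2).const_mul (16 * T / r₀ ^ 2))
  simpa using h3

-- (B) nondegeneracy: a projection of the spiral cannot be constant on an interval
lemma no_const_proj (hω : 0 < ω) (hα : 0 < α) {a b q0 q1 K : ℝ} (hab : a < b)
    (h : ∀ s ∈ Icc a b,
      Real.exp (α * s) * (q0 * Real.cos (ω * s + ψ₀) + q1 * Real.sin (ω * s + ψ₀)) = K) :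
    q0 = 0 ∧ q1 = 0 := by
  set f : ℝ → ℝ := fun s =>
    Real.exp (α * s) * (q0 * Real.cos (ω * s + ψ₀) + q1 * Real.sin (ω * s + ψ₀)) with hf
  set A := α * q0 + ω * q1 with hA
  set B := α * q1 - ω * q0 with hB
  have hf' : ∀ s : ℝ, HasDerivAt f
      (Real.exp (α * s) * (A * Real.cos (ω * s + ψ₀) + B * Real.sin (ω * s + ψ₀))) s := by
    intro s
    have he : HasDerivAt (fun τ => Real.exp (α * τ)) (Real.exp (α * s) * α) s := by
      simpa using hasDerivAt_comp_scalar (h := Real.exp) (c := α) (d := 0)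
        (by simpa using Real.hasDerivAt_exp (α * s))
    have hc : HasDerivAt (fun τ => Real.cos (ω * τ + ψ₀)) (-Real.sin (ω * s + ψ₀) * ω) s :=
      hasDerivAt_comp_scalar (Real.hasDerivAt_cos _)
    have hs : HasDerivAt (fun τ => Real.sin (ω * τ + ψ₀)) (Real.cos (ω * s + ψ₀) * ω) s :=
      hasDerivAt_comp_scalar (Real.hasDerivAt_sin _)
    have := he.mul (((hc.const_mul q0)).add ((hs.const_mul q1)))
    exact this.congr_deriv (by simp only [Pi.add_apply]; rw [hA, hB]; ring)
  -- f is constant K on the open interval, so its derivative vanishes there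
  have hgzero : ∀ s ∈ Ioo a b,
      A * Real.cos (ω * s + ψ₀) + B * Real.sin (ω * s + ψ₀) = 0 := by
    intro s hs
    have hev : f =ᶠ[nhds s] fun _ => K :=
      Filter.eventuallyEq_of_mem (Ioo_mem_nhds hs.1 hs.2)
        (fun x hx => h x (Ioo_subset_Icc_self hx))
    have h0 : HasDerivAt f 0 s := by
      have := (hasDerivAt_const s K).congr_of_eventuallyEq hev
      simpa using this
    have := (hf' s).unique h0
    have hexp := Real.exp_pos (α * s)
    have := mul_eq_zero.mp this
    rcases this with h' | h'
    · exact absurd h' (ne_of_gt hexp)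
    · exact h'
  -- now the derivative of that trig combination also vanishes at the midpoint
  set s₀ := (a + b) / 2 with hs₀
  have hs₀mem : s₀ ∈ Ioo a b := ⟨by simp [hs₀]; linarith, by simp [hs₀]; linarith⟩
  have hg' : HasDerivAt (fun s => A * Real.cos (ω * s + ψ₀) + B * Real.sin (ω * s + ψ₀))
      ((-A * Real.sin (ω * s₀ + ψ₀) + B * Real.cos (ω * s₀ + ψ₀)) * ω) s₀ := by
    have hc : HasDerivAt (fun τ => Real.cos (ω * τ + ψ₀)) (-Real.sin (ω * s₀ + ψ₀) * ω) s₀ :=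
      hasDerivAt_comp_scalar (Real.hasDerivAt_cos _)
    have hs : HasDerivAt (fun τ => Real.sin (ω * τ + ψ₀)) (Real.cos (ω * s₀ + ψ₀) * ω) s₀ :=
      hasDerivAt_comp_scalar (Real.hasDerivAt_sin _)
    have := (hc.const_mul A).add (hs.const_mul B)
    exact this.congr_deriv (by ring)
  have hg0 : HasDerivAt (fun s => A * Real.cos (ω * s + ψ₀) + B * Real.sin (ω * s + ψ₀)) 0 s₀ := by
    have hev : (fun s => A * Real.cos (ω * s + ψ₀) + B * Real.sin (ω * s + ψ₀))
        =ᶠ[nhds s₀] fun _ => (0:ℝ) :=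
      Filter.eventuallyEq_of_mem (Ioo_mem_nhds hs₀mem.1 hs₀mem.2) (fun x hx => hgzero x hx)
    have := (hasDerivAt_const s₀ (0:ℝ)).congr_of_eventuallyEq hev
    simpa using this
  have key2 : -A * Real.sin (ω * s₀ + ψ₀) + B * Real.cos (ω * s₀ + ψ₀) = 0 := by
    have := hg'.unique hg0
    have := mul_eq_zero.mp this
    rcases this with h' | h'
    · exact h'
    · exact absurd h' (ne_of_gt hω)
  have key1 : A * Real.cos (ω * s₀ + ψ₀) + B * Real.sin (ω * s₀ + ψ₀) = 0 := hgzero s₀ hs₀mem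
  have htrig := Real.sin_sq_add_cos_sq (ω * s₀ + ψ₀)
  have hAzero : A = 0 := by
    linear_combination Real.cos (ω * s₀ + ψ₀) * key1 - Real.sin (ω * s₀ + ψ₀) * key2 - A * htrig
  have hBzero : B = 0 := by
    linear_combination Real.sin (ω * s₀ + ψ₀) * key1 + Real.cos (ω * s₀ + ψ₀) * key2 - B * htrig
  have e1 : α * q0 + ω * q1 = 0 := by rw [← hA]; exact hAzero
  have e2 : α * q1 - ω * q0 = 0 := by rw [← hB]; exact hBzero
  have hpos : (0:ℝ) < α^2 + ω^2 := by positivity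
  constructor
  · have h1 : (α^2 + ω^2) * q0 = 0 := by linear_combination α * e1 - ω * e2
    exact (mul_eq_zero.mp h1).resolve_left (ne_of_gt hpos)
  · have h1 : (α^2 + ω^2) * q1 = 0 := by linear_combination ω * e1 + α * e2
    exact (mul_eq_zero.mp h1).resolve_left (ne_of_gt hpos)

lemma vec2_eq_self (z : Pt) : vec2 (z 0) (z 1) = z := by
  ext i; fin_cases i <;> rfl

lemma inner_vec2 (a b c d : ℝ) : ⟪vec2 a b, vec2 c d⟫ = a*c + b*d := by
  simp [vec2, PiLp.inner_apply, Fin.sum_univ_two]; ring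

lemma vec2_zero : vec2 0 0 = (0 : Pt) := by
  ext i; fin_cases i <;> rfl

-- distance of the perturbed trajectory from the beacon
lemma path_dist (hα : 0 < α) (hr₀pos : 0 < r₀) {a s : ℝ} (ha : 0 ≤ a) (hs : 0 ≤ s)
    {ξ : Pt} (hξ : ξ ∈ closedBall (ℓ + spir ω α r₀ ψ₀ a) (r₀ / 2)) :
    r₀ / 2 ≤ ‖ℓ - flow2 (uspi ω α r₀ ψ₀) s a ξ‖ := by
  rw [flow_uspi]
  have hrew : ℓ - (ξ + (spir ω α r₀ ψ₀ s - spir ω α r₀ ψ₀ a)) =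
      (ℓ + spir ω α r₀ ψ₀ a - ξ) - spir ω α r₀ ψ₀ s := by abel
  rw [hrew]
  have h1 : ‖spir ω α r₀ ψ₀ s‖ - ‖ℓ + spir ω α r₀ ψ₀ a - ξ‖ ≤
      ‖(ℓ + spir ω α r₀ ψ₀ a - ξ) - spir ω α r₀ ψ₀ s‖ := by
    have := norm_sub_norm_le (spir ω α r₀ ψ₀ s) (spir ω α r₀ ψ₀ s - ((ℓ + spir ω α r₀ ψ₀ a - ξ) - spir ω α r₀ ψ₀ s))
    calc ‖spir ω α r₀ ψ₀ s‖ - ‖ℓ + spir ω α r₀ ψ₀ a - ξ‖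
        ≤ ‖spir ω α r₀ ψ₀ s - (ℓ + spir ω α r₀ ψ₀ a - ξ)‖ := norm_sub_norm_le _ _
      _ = ‖(ℓ + spir ω α r₀ ψ₀ a - ξ) - spir ω α r₀ ψ₀ s‖ := norm_sub_rev _ _
  have h2 : ‖ℓ + spir ω α r₀ ψ₀ a - ξ‖ ≤ r₀ / 2 := by
    rw [mem_closedBall, dist_eq_norm] at hξ
    calc ‖ℓ + spir ω α r₀ ψ₀ a - ξ‖ = ‖ξ - (ℓ + spir ω α r₀ ψ₀ a)‖ := norm_sub_rev _ _
      _ ≤ r₀ / 2 := hξ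
  have h3 : r₀ ≤ ‖spir ω α r₀ ψ₀ s‖ := by
    rw [norm_spir ω α r₀ ψ₀ hr₀pos]
    nlinarith [Real.one_le_exp (by positivity : (0:ℝ) ≤ α * s)]
  linarith

lemma exists_bearing_ne (hω : 0 < ω) (hα : 0 < α) (hr₀pos : 0 < r₀)
    {a b : ℝ} (ha : 0 ≤ a) (hab : a < b) {ξ₁ ξ₂ : Pt}
    (h₁ : ξ₁ ∈ closedBall (ℓ + spir ω α r₀ ψ₀ a) (r₀ / 2))
    (h₂ : ξ₂ ∈ closedBall (ℓ + spir ω α r₀ ψ₀ a) (r₀ / 2)) (hne : ξ₁ ≠ ξ₂) :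
    ∃ s ∈ Icc a b, bearing ℓ (flow2 (uspi ω α r₀ ψ₀) s a ξ₁) ≠
      bearing ℓ (flow2 (uspi ω α r₀ ψ₀) s a ξ₂) := by
  by_contra hcon
  push_neg at hcon
  set v := ξ₁ - ξ₂ with hv
  have hvne : v ≠ 0 := sub_ne_zero.mpr hne
  set q : Pt := vec2 (-(v 1)) (v 0) with hq
  have hqv : ⟪q, v⟫ = 0 := by
    have h' : ⟪q, vec2 (v 0) (v 1)⟫ = 0 := by rw [hq, inner_vec2]; ring
    rwa [vec2_eq_self] at h'
  -- the bearing equality forces ⟪q, ℓ - flow₁ s⟫ = 0 on [a,b]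
  have horth : ∀ s ∈ Icc a b, ⟪q, ℓ - flow2 (uspi ω α r₀ ψ₀) s a ξ₁⟫ = 0 := by
    intro s hs
    have hs0 : (0:ℝ) ≤ s := le_trans ha hs.1
    set w₁ := ℓ - flow2 (uspi ω α r₀ ψ₀) s a ξ₁ with hw₁
    set w₂ := ℓ - flow2 (uspi ω α r₀ ψ₀) s a ξ₂ with hw₂
    have hd1 : r₀ / 2 ≤ ‖w₁‖ := path_dist ℓ ω α r₀ ψ₀ hα hr₀pos ha hs0 h₁
    have hd2 : r₀ / 2 ≤ ‖w₂‖ := path_dist ℓ ω α r₀ ψ₀ hα hr₀pos ha hs0 h₂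
    have hw1pos : (0:ℝ) < ‖w₁‖ := by linarith
    have hw2pos : (0:ℝ) < ‖w₂‖ := by linarith
    have hfl1 : flow2 (uspi ω α r₀ ψ₀) s a ξ₁ ≠ ℓ := by
      intro h; rw [hw₁, h] at hw1pos; simp at hw1pos
    have hfl2 : flow2 (uspi ω α r₀ ψ₀) s a ξ₂ ≠ ℓ := by
      intro h; rw [hw₂, h] at hw2pos; simp at hw2pos
    have heq := hcon s hs
    rw [bearing, bearing, if_neg hfl1, if_neg hfl2] at heq
    rw [← hw₁, ← hw₂] at heq
    -- w₂ = μ • w₁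
    have hw2eq : w₂ = (‖w₂‖ * ‖w₁‖⁻¹) • w₁ := by
      calc w₂ = ‖w₂‖ • (‖w₂‖⁻¹ • w₂) := by
            rw [smul_smul, mul_inv_cancel₀ (ne_of_gt hw2pos), one_smul]
        _ = ‖w₂‖ • (‖w₁‖⁻¹ • w₁) := by rw [← heq]
        _ = (‖w₂‖ * ‖w₁‖⁻¹) • w₁ := by rw [smul_smul]
    -- v = w₂ - w₁ ... check sign: w₂ - w₁ = flow₁ - flow₂ = ξ₁ - ξ₂ = v
    have hvw : v = w₂ - w₁ := by
      rw [hw₁, hw₂, flow_uspi, flow_uspi, hv]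
      abel
    set μ := ‖w₂‖ * ‖w₁‖⁻¹ with hμ
    have hvmu : v = (μ - 1) • w₁ := by
      rw [hvw, hw2eq, sub_smul, one_smul]
    have hμne : μ - 1 ≠ 0 := by
      intro h
      rw [h, zero_smul] at hvmu
      exact hvne hvmu
    have hw1v : w₁ = (μ - 1)⁻¹ • v := by
      rw [hvmu, smul_smul, inv_mul_cancel₀ hμne, one_smul]
    rw [hw1v, real_inner_smul_right, hqv, mul_zero]
  -- translate into the scalar constancy statement
  have hK : ∀ s ∈ Icc a b,
      Real.exp (α * s) * ((-(v 1)) * Real.cos (ω * s + ψ₀) + (v 0) * Real.sin (ω * s + ψ₀))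
        = ⟪q, ℓ + spir ω α r₀ ψ₀ a - ξ₁⟫ / r₀ := by
    intro s hs
    have := horth s hs
    rw [flow_uspi] at this
    have hrw : ℓ - (ξ₁ + (spir ω α r₀ ψ₀ s - spir ω α r₀ ψ₀ a)) =
        (ℓ + spir ω α r₀ ψ₀ a - ξ₁) - spir ω α r₀ ψ₀ s := by abel
    rw [hrw, inner_sub_right, sub_eq_zero] at this
    have hspir : ⟪q, spir ω α r₀ ψ₀ s⟫ =
        r₀ * Real.exp (α * s) *
          ((-(v 1)) * Real.cos (ω * s + ψ₀) + (v 0) * Real.sin (ω * s + ψ₀)) := by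
      rw [hq, spir, inner_vec2]
      ring
    rw [hspir] at this
    rw [eq_div_iff (ne_of_gt hr₀pos)]
    linear_combination -this
  have := no_const_proj ω α ψ₀ hω hα hab hK
  apply hvne
  have h0 : v 0 = 0 := this.2
  have h1 : v 1 = 0 := neg_eq_zero.mp this.1
  rw [← vec2_eq_self v, h0, h1, vec2_zero]

lemma continuous_spir : Continuous (spir ω α r₀ ψ₀) := by
  apply continuous_vec2 <;> fun_prop

lemma continuousOn_bearing : ContinuousOn (bearing ℓ) {z : Pt | z ≠ ℓ} := by
  have h : ContinuousOn (fun z : Pt => ‖ℓ - z‖⁻¹ • (ℓ - z)) {z : Pt | z ≠ ℓ} := by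
    apply ContinuousOn.fun_smul
    · apply ContinuousOn.inv₀
      · exact (continuous_const.sub continuous_id).norm.continuousOn
      · intro z hz
        simp only [Set.mem_setOf_eq] at hz
        simp only [norm_ne_zero_iff, sub_ne_zero]
        exact fun hh => hz hh.symm
    · exact (continuous_const.sub continuous_id).continuousOn
  exact ContinuousOn.congr h (fun z hz => by rw [bearing, if_neg hz])

lemma continuous_flow_s (a : ℝ) (ξ : Pt) :
    Continuous (fun s => flow2 (uspi ω α r₀ ψ₀) s a ξ) := by
  have h : (fun s => flow2 (uspi ω α r₀ ψ₀) s a ξ)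
      = fun s => ξ + (spir ω α r₀ ψ₀ s - spir ω α r₀ ψ₀ a) :=
    funext (fun s => flow_uspi ω α r₀ ψ₀ s a ξ)
  rw [h]
  exact continuous_const.add ((continuous_spir ω α r₀ ψ₀).sub continuous_const)

lemma path_ne (hα : 0 < α) (hr₀pos : 0 < r₀) {a s : ℝ}
    (hexp : 1/2 < Real.exp (α * s))
    {ξ : Pt} (hξ : ξ ∈ closedBall (ℓ + spir ω α r₀ ψ₀ a) (r₀ / 2)) :
    flow2 (uspi ω α r₀ ψ₀) s a ξ ≠ ℓ := by
  have key : 0 < ‖ℓ - flow2 (uspi ω α r₀ ψ₀) s a ξ‖ := by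
    rw [flow_uspi]
    have hrew : ℓ - (ξ + (spir ω α r₀ ψ₀ s - spir ω α r₀ ψ₀ a)) =
        (ℓ + spir ω α r₀ ψ₀ a - ξ) - spir ω α r₀ ψ₀ s := by abel
    rw [hrew]
    have h1 : ‖spir ω α r₀ ψ₀ s‖ - ‖ℓ + spir ω α r₀ ψ₀ a - ξ‖ ≤
        ‖(ℓ + spir ω α r₀ ψ₀ a - ξ) - spir ω α r₀ ψ₀ s‖ :=
      le_trans (norm_sub_norm_le _ _) (le_of_eq (norm_sub_rev _ _))
    have h2 : ‖ℓ + spir ω α r₀ ψ₀ a - ξ‖ ≤ r₀ / 2 := by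
      rw [mem_closedBall, dist_eq_norm] at hξ
      exact le_trans (le_of_eq (norm_sub_rev _ _)) hξ
    have h3 : r₀ / 2 < ‖spir ω α r₀ ψ₀ s‖ := by
      rw [norm_spir ω α r₀ ψ₀ hr₀pos]
      nlinarith
    linarith
  intro h
  rw [h] at key
  simp at key

lemma cum_pos (hω : 0 < ω) (hα : 0 < α) (hr₀pos : 0 < r₀)
    {a b : ℝ} (ha : 0 ≤ a) (hab : a < b) {ξ₁ ξ₂ : Pt}
    (h₁ : ξ₁ ∈ closedBall (ℓ + spir ω α r₀ ψ₀ a) (r₀ / 2))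
    (h₂ : ξ₂ ∈ closedBall (ℓ + spir ω α r₀ ψ₀ a) (r₀ / 2)) (hne : ξ₁ ≠ ξ₂) :
    0 < cumError2 ℓ (uspi ω α r₀ ψ₀) a b ξ₁ ξ₂ := by
  set u := uspi ω α r₀ ψ₀ with hu
  set G : ℝ → ℝ := fun s =>
    ‖bearing ℓ (flow2 u s a ξ₁) - bearing ℓ (flow2 u s a ξ₂)‖ ^ 2 with hG
  set U : Set ℝ := {s : ℝ | 1/2 < Real.exp (α * s)} with hU
  have hUopen : IsOpen U := by
    have : Continuous (fun s : ℝ => Real.exp (α * s)) := by fun_prop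
    exact isOpen_lt continuous_const this
  have hIccU : Icc a b ⊆ U := by
    intro s hs
    have : (0:ℝ) ≤ α * s := mul_nonneg hα.le (le_trans ha hs.1)
    have := Real.one_le_exp this
    simp only [hU, Set.mem_setOf_eq]
    linarith
  have hGcont : ContinuousOn G U := by
    have hc1 : ContinuousOn (fun s => bearing ℓ (flow2 u s a ξ₁)) U := by
      apply (continuousOn_bearing ℓ).comp (continuous_flow_s ω α r₀ ψ₀ a ξ₁).continuousOn
      intro s hs
      exact path_ne ℓ ω α r₀ ψ₀ hα hr₀pos hs h₁
    have hc2 : ContinuousOn (fun s => bearing ℓ (flow2 u s a ξ₂)) U := by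
      apply (continuousOn_bearing ℓ).comp (continuous_flow_s ω α r₀ ψ₀ a ξ₂).continuousOn
      intro s hs
      exact path_ne ℓ ω α r₀ ψ₀ hα hr₀pos hs h₂
    exact ((hc1.sub hc2).norm).pow 2
  have hGint : IntervalIntegrable G volume a b := by
    apply ContinuousOn.intervalIntegrable
    apply hGcont.mono
    rw [uIcc_of_le hab.le]
    exact hIccU
  obtain ⟨s₀, hs₀mem, hs₀ne⟩ := exists_bearing_ne ℓ ω α r₀ ψ₀ hω hα hr₀pos ha hab h₁ h₂ hne
  have hGpos : 0 < G s₀ :=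
    pow_pos (norm_pos_iff.mpr (sub_ne_zero.mpr hs₀ne)) 2
  rw [cumError2]
  rw [show (∫ s in a..b, ‖bearing ℓ (flow2 u s a ξ₁) - bearing ℓ (flow2 u s a ξ₂)‖ ^ 2)
      = ∫ s in a..b, G s from rfl]
  apply (intervalIntegral.integral_pos_iff_support_of_nonneg_ae'
    (ae_of_all _ (fun s => by positivity)) hGint).mpr
  refine ⟨hab, ?_⟩
  have hGc : ContinuousAt G s₀ := hGcont.continuousAt (hUopen.mem_nhds (hIccU hs₀mem))
  have hev : ∀ᶠ x in nhds s₀, 0 < G x := hGc.eventually (eventually_gt_nhds hGpos)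
  obtain ⟨ε, hε, hball⟩ := Metric.eventually_nhds_iff_ball.mp hev
  set c := max a (s₀ - ε) with hc
  set d := min b (s₀ + ε) with hd
  have hcd : c < d := by
    apply max_lt
    · apply lt_min hab
      linarith [hs₀mem.1, hε]
    · apply lt_min
      · linarith [hs₀mem.2, hε]
      · linarith
  have hsub : Ioo c d ⊆ Function.support G ∩ Ioc a b := by
    intro x hx
    constructor
    · apply ne_of_gt
      apply hball
      rw [Metric.mem_ball, Real.dist_eq, abs_sub_lt_iff]
      constructor
      · have : d ≤ s₀ + ε := min_le_right _ _
        linarith [hx.2]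
      · have : s₀ - ε ≤ c := le_max_right _ _
        linarith [hx.1]
    · constructor
      · exact lt_of_le_of_lt (le_max_left _ _) hx.1
      · exact le_trans hx.2.le (min_le_left _ _)
  calc (0:ENNReal) < volume (Ioo c d) := by
        rw [Real.volume_Ioo]
        exact ENNReal.ofReal_pos.mpr (by linarith)
    _ ≤ volume (Function.support G ∩ Ioc a b) := measure_mono hsub

-- (E) continuity of the cumulative error on the product of balls
lemma continuousOn_cum (hα : 0 < α) (hr₀pos : 0 < r₀) {a b : ℝ} (ha : 0 ≤ a) (hab : a ≤ b) :
    ContinuousOn (fun p : Pt × Pt => cumError2 ℓ (uspi ω α r₀ ψ₀) a b p.1 p.2)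
      (closedBall (ℓ + spir ω α r₀ ψ₀ a) (r₀/2) ×ˢ closedBall (ℓ + spir ω α r₀ ψ₀ a) (r₀/2)) := by
  set nb : Pt → Pt := fun z => (max ‖ℓ - z‖ (r₀/2))⁻¹ • (ℓ - z) with hnbdef
  have hnb : Continuous nb := by
    apply Continuous.fun_smul
    · apply Continuous.inv₀
      · exact ((continuous_const.sub continuous_id).norm).max continuous_const
      · intro z
        have : (0:ℝ) < max ‖ℓ - z‖ (r₀/2) := lt_of_lt_of_le (by linarith) (le_max_right _ _)
        exact ne_of_gt this
    · exact continuous_const.sub continuous_id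
  have hnbeq : ∀ z : Pt, r₀/2 ≤ ‖ℓ - z‖ → bearing ℓ z = nb z := by
    intro z hz
    have hzne : z ≠ ℓ := by
      intro h
      rw [h] at hz
      simp at hz
      linarith
    rw [bearing, if_neg hzne, hnbdef]
    simp only [max_eq_left hz]
  set Ft : Pt × Pt → ℝ := fun p => ∫ s in a..b,
    ‖nb (p.1 + (spir ω α r₀ ψ₀ s - spir ω α r₀ ψ₀ a)) -
      nb (p.2 + (spir ω α r₀ ψ₀ s - spir ω α r₀ ψ₀ a))‖ ^ 2 with hFt
  have hFtcont : Continuous Ft := by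
    apply intervalIntegral.continuous_parametric_intervalIntegral_of_continuous'
    show Continuous fun q : (Pt × Pt) × ℝ =>
      ‖nb (q.1.1 + (spir ω α r₀ ψ₀ q.2 - spir ω α r₀ ψ₀ a)) -
        nb (q.1.2 + (spir ω α r₀ ψ₀ q.2 - spir ω α r₀ ψ₀ a))‖ ^ 2
    have hsp : Continuous fun q : (Pt × Pt) × ℝ => spir ω α r₀ ψ₀ q.2 - spir ω α r₀ ψ₀ a :=
      ((continuous_spir ω α r₀ ψ₀).comp continuous_snd).sub continuous_const
    have h1 : Continuous fun q : (Pt × Pt) × ℝ =>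
        q.1.1 + (spir ω α r₀ ψ₀ q.2 - spir ω α r₀ ψ₀ a) :=
      (continuous_fst.fst).add hsp
    have h2 : Continuous fun q : (Pt × Pt) × ℝ =>
        q.1.2 + (spir ω α r₀ ψ₀ q.2 - spir ω α r₀ ψ₀ a) :=
      (continuous_fst.snd).add hsp
    exact (((hnb.comp h1).sub (hnb.comp h2)).norm).pow 2
  apply ContinuousOn.congr hFtcont.continuousOn
  intro p hp
  rw [Set.mem_prod] at hp
  show cumError2 ℓ (uspi ω α r₀ ψ₀) a b p.1 p.2 = Ft p
  rw [cumError2, hFt]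
  apply intervalIntegral.integral_congr
  intro s hs
  rw [uIcc_of_le hab] at hs
  have hs0 : (0:ℝ) ≤ s := le_trans ha hs.1
  have hf1 : flow2 (uspi ω α r₀ ψ₀) s a p.1 = p.1 + (spir ω α r₀ ψ₀ s - spir ω α r₀ ψ₀ a) :=
    flow_uspi ω α r₀ ψ₀ s a p.1
  have hf2 : flow2 (uspi ω α r₀ ψ₀) s a p.2 = p.2 + (spir ω α r₀ ψ₀ s - spir ω α r₀ ψ₀ a) :=
    flow_uspi ω α r₀ ψ₀ s a p.2
  have hd1 := path_dist ℓ ω α r₀ ψ₀ hα hr₀pos ha hs0 hp.1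
  have hd2 := path_dist ℓ ω α r₀ ψ₀ hα hr₀pos ha hs0 hp.2
  rw [hf1] at hd1
  rw [hf2] at hd2
  show ‖bearing ℓ (flow2 (uspi ω α r₀ ψ₀) s a p.1) -
      bearing ℓ (flow2 (uspi ω α r₀ ψ₀) s a p.2)‖ ^ 2 = _
  rw [hf1, hf2, hnbeq _ hd1, hnbeq _ hd2]

-- (F) construction of the K-function
lemma exists_kfun (c : Pt) (R : ℝ) (hR : 0 < R) (F : Pt × Pt → ℝ)
    (hFc : ContinuousOn F (closedBall c R ×ˢ closedBall c R))
    (hF0 : ∀ p : Pt × Pt, p ∈ closedBall c R ×ˢ closedBall c R → 0 ≤ F p)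
    (hFpos : ∀ p : Pt × Pt, p ∈ closedBall c R ×ˢ closedBall c R → p.1 ≠ p.2 → 0 < F p) :
    ∃ κ : ℝ → ℝ, IsKFunction κ ∧ ∀ ξ₁ ∈ closedBall c R, ∀ ξ₂ ∈ closedBall c R,
      κ ‖ξ₁ - ξ₂‖ ≤ F (ξ₁, ξ₂) := by
  set D := closedBall c R ×ˢ closedBall c R with hD
  have hDcomp : IsCompact D := (isCompact_closedBall c R).prod (isCompact_closedBall c R)
  set K : ℝ → Set (Pt × Pt) := fun d => D ∩ {p : Pt × Pt | d ≤ ‖p.1 - p.2‖} with hK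
  have hKcomp : ∀ d, IsCompact (K d) := fun d =>
    hDcomp.inter_right (isClosed_le continuous_const ((continuous_fst.sub continuous_snd).norm))
  have hKne : ∀ d, d ≤ 2*R → (K d).Nonempty := by
    intro d hd
    have he : ‖vec2 1 0‖ = 1 := by
      rw [norm_vec2]; norm_num
    refine ⟨(c + R • vec2 1 0, c - R • vec2 1 0), ⟨⟨?_, ?_⟩, ?_⟩⟩
    · rw [mem_closedBall, dist_eq_norm]
      have : c + R • vec2 1 0 - c = R • vec2 1 0 := by abel
      rw [this, norm_smul, he, Real.norm_eq_abs, abs_of_pos hR, mul_one]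
    · rw [mem_closedBall, dist_eq_norm]
      have : c - R • vec2 1 0 - c = -(R • vec2 1 0) := by abel
      rw [this, norm_neg, norm_smul, he, Real.norm_eq_abs, abs_of_pos hR, mul_one]
    · simp only [Set.mem_setOf_eq]
      have : (c + R • vec2 1 0) - (c - R • vec2 1 0) = (R + R) • vec2 1 0 := by
        rw [add_smul]; abel
      rw [this, norm_smul, he, Real.norm_eq_abs, abs_of_pos (by linarith), mul_one]
      linarith
  have hbdd : ∀ d, BddBelow (F '' K d) := by
    intro d
    refine ⟨0, ?_⟩
    rintro y ⟨p, hp, rfl⟩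
    exact hF0 p hp.1
  have hmpos : ∀ d, 0 < d → d ≤ 2*R → 0 < sInf (F '' K d) := by
    intro d hd hd2
    obtain ⟨p₀, hp₀, hmin⟩ := (hKcomp d).exists_isMinOn (hKne d hd2)
      (hFc.mono inter_subset_left)
    have heq : sInf (F '' K d) = F p₀ := by
      apply IsLeast.csInf_eq
      exact ⟨mem_image_of_mem F hp₀, by rintro y ⟨p, hp, rfl⟩; exact hmin hp⟩
    rw [heq]
    apply hFpos p₀ hp₀.1
    have := hp₀.2
    simp only [Set.mem_setOf_eq] at this
    intro hcon
    rw [hcon, sub_self, norm_zero] at this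
    linarith
  have hmnonneg : ∀ d, d ≤ 2*R → 0 ≤ sInf (F '' K d) := by
    intro d hd
    apply le_csInf ((hKne d hd).image F)
    rintro y ⟨p, hp, rfl⟩
    exact hF0 p hp.1
  have hmle : ∀ d, ∀ p ∈ K d, sInf (F '' K d) ≤ F p := fun d p hp =>
    csInf_le (hbdd d) (mem_image_of_mem F hp)
  have hmmono : ∀ d d', 0 < d → d ≤ d' → d' ≤ 2*R →
      sInf (F '' K d) ≤ sInf (F '' K d') := by
    intro d d' hd hdd' hd2
    apply csInf_le_csInf (hbdd d) ((hKne d' hd2).image F)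
    apply image_mono
    apply inter_subset_inter_right
    intro p hp
    simp only [Set.mem_setOf_eq] at *
    linarith
  set g : ℝ → ℝ := fun d => if d ≤ 0 then 0 else min (sInf (F '' K (min d (2*R)))) 1 with hg
  have hg0 : ∀ d, 0 ≤ g d := by
    intro d
    simp only [hg]
    split_ifs with h
    · exact le_rfl
    · exact le_min (hmnonneg _ (min_le_right _ _)) zero_le_one
  have hg1 : ∀ d, g d ≤ 1 := by
    intro d
    simp only [hg]
    split_ifs with h
    · norm_num
    · exact min_le_right _ _
  have hgpos : ∀ d, 0 < d → 0 < g d := by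
    intro d hd
    simp only [hg, if_neg (not_le.mpr hd)]
    exact lt_min (hmpos _ (lt_min hd (by linarith)) (min_le_right _ _)) one_pos
  have hgmono : Monotone g := by
    intro d d' hdd'
    by_cases hd : d ≤ 0
    · have hzero : g d = 0 := by simp only [hg, if_pos hd]
      rw [hzero]
      exact hg0 d'
    · have hd' : ¬ (d' ≤ 0) := fun h => hd (hdd'.trans h)
      simp only [hg, if_neg hd, if_neg hd']
      push_neg at hd
      apply min_le_min _ le_rfl
      exact hmmono _ _ (lt_min hd (by linarith)) (min_le_min hdd' le_rfl) (min_le_right _ _)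
  have hgF : ∀ p : Pt × Pt, p ∈ D → p.1 ≠ p.2 → g ‖p.1 - p.2‖ ≤ F p := by
    intro p hp hne
    have hd : 0 < ‖p.1 - p.2‖ := norm_pos_iff.mpr (sub_ne_zero.mpr hne)
    simp only [hg, if_neg (not_le.mpr hd)]
    refine (min_le_left _ _).trans (hmle _ p ⟨hp, ?_⟩)
    simp only [Set.mem_setOf_eq]
    exact min_le_left _ _
  have hgint : ∀ x y : ℝ, IntervalIntegrable g volume x y := fun x y =>
    hgmono.intervalIntegrable
  set A : ℝ → ℝ := fun x => ∫ τ in (0:ℝ)..x, g τ with hA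
  have hAsub : ∀ x y : ℝ, A y - A x = ∫ τ in x..y, g τ := by
    intro x y
    rw [hA]
    exact intervalIntegral.integral_interval_sub_left (hgint 0 y) (hgint 0 x)
  have hAlip : LipschitzWith 1 A := by
    apply LipschitzWith.of_dist_le_mul
    intro x y
    rw [Real.dist_eq, Real.dist_eq]
    have h := hAsub y x
    have hb : ∀ τ ∈ Set.uIoc y x, ‖g τ‖ ≤ 1 := by
      intro τ _
      rw [Real.norm_eq_abs, abs_of_nonneg (hg0 τ)]
      exact hg1 τ
    have := intervalIntegral.norm_integral_le_of_norm_le_const hb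
    rw [← h] at this
    rw [Real.norm_eq_abs] at this
    simpa using this
  have hAnonneg : ∀ x, 0 ≤ x → 0 ≤ A x := fun x hx =>
    intervalIntegral.integral_nonneg hx (fun τ _ => hg0 τ)
  have hAlow : ∀ x y, 0 ≤ x → x ≤ y → (y - x) * g x ≤ A y - A x := by
    intro x y hx hxy
    rw [hAsub x y]
    have : ∫ τ in x..y, g x ≤ ∫ τ in x..y, g τ :=
      intervalIntegral.integral_mono_on hxy (intervalIntegrable_const) (hgint x y)
        (fun τ hτ => hgmono hτ.1)
    rw [intervalIntegral.integral_const, smul_eq_mul] at this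
    exact this
  have hAup : ∀ x, 0 ≤ x → A x ≤ x * g x := by
    intro x hx
    have : ∫ τ in (0:ℝ)..x, g τ ≤ ∫ τ in (0:ℝ)..x, g x :=
      intervalIntegral.integral_mono_on hx (hgint 0 x) (intervalIntegrable_const)
        (fun τ hτ => hgmono hτ.2)
    rw [intervalIntegral.integral_const, smul_eq_mul, sub_zero] at this
    exact this
  have hA0 : A 0 = 0 := intervalIntegral.integral_same
  refine ⟨fun x => A x / (1 + x), ⟨?_, ?_, ?_⟩, ?_⟩
  · -- continuity
    apply ContinuousOn.div hAlip.continuous.continuousOn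
      (continuous_const.add continuous_id).continuousOn
    intro x hx
    have : (0:ℝ) ≤ x := hx
    exact ne_of_gt (by show (0:ℝ) < 1 + x; linarith)
  · -- strict monotone
    intro x hx y hy hxy
    simp only
    have hx0 : (0:ℝ) ≤ x := hx
    have hy0 : (0:ℝ) ≤ y := hy
    have h1x : (0:ℝ) < 1 + x := by linarith
    have h1y : (0:ℝ) < 1 + y := by linarith
    rcases eq_or_lt_of_le hx0 with heq | hxpos
    · rw [← heq, hA0]
      simp only [zero_div]
      have hy2 : (0:ℝ) < y / 2 := by rw [← heq] at hxy; linarith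
      have hlow := hAlow (y/2) y (by linarith) (by linarith)
      have hnn := hAnonneg (y/2) (by linarith)
      have hgp := hgpos (y/2) hy2
      have hApos : 0 < A y := by nlinarith
      positivity
    · rw [div_lt_div_iff₀ h1x h1y]
      have hlow := hAlow x y hx0 hxy.le
      have hup := hAup x hx0
      have hgp := hgpos x hxpos
      have hnn := hAnonneg x hx0
      nlinarith [mul_pos (sub_pos.mpr hxy) hgp]
  · simp [hA0]
  · intro ξ₁ h₁ ξ₂ h₂
    simp only
    by_cases heq : ξ₁ = ξ₂
    · rw [heq, sub_self, norm_zero, hA0, zero_div]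
      exact hF0 (ξ₂, ξ₂) ⟨h₂, h₂⟩
    · have hd : 0 < ‖ξ₁ - ξ₂‖ := norm_pos_iff.mpr (sub_ne_zero.mpr heq)
      have hgFle := hgF (ξ₁, ξ₂) ⟨h₁, h₂⟩ heq
      have hup := hAup _ hd.le
      have hFnn := hF0 (ξ₁, ξ₂) ⟨h₁, h₂⟩
      rw [div_le_iff₀ (by linarith)]
      nlinarith

lemma spir_smul (s : ℝ) : spir ω α r₀ ψ₀ s =
    (r₀ * Real.exp (α * s)) • vec2 (Real.cos (ω * s + ψ₀)) (Real.sin (ω * s + ψ₀)) :=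
  (vec2_smul _ _ _).symm

end

/-- the outward spiral input is weakly persistent at `x₀`, its
trajectory is `x(s) = ℓ + r₀ e^{αs}(cos(ωs+ψ₀), sin(ωs+ψ₀)) ≠ ℓ`, and for every
`T > 0` the operator norm of the Observability Grammian tends to `0` as `t → ∞`. -/
theorem stmt19 (ℓ x₀ : Pt) (hx₀ : x₀ ≠ ℓ) (ω α r₀ ψ₀ : ℝ)
    (hω : 0 < ω) (hα : 0 < α) (hr₀ : r₀ = ‖ℓ - x₀‖) (hr₀pos : 0 < r₀)
    (hψ₀ : x₀ - ℓ = r₀ • vec2 (Real.cos ψ₀) (Real.sin ψ₀)) :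
    (∀ s : ℝ, 0 ≤ s →
      flow2 (fun τ => (r₀ * Real.exp (α * τ)) •
          (ω • vec2 (-Real.sin (ω * τ + ψ₀)) (Real.cos (ω * τ + ψ₀)) +
            α • vec2 (Real.cos (ω * τ + ψ₀)) (Real.sin (ω * τ + ψ₀)))) s 0 x₀ =
        ℓ + (r₀ * Real.exp (α * s)) • vec2 (Real.cos (ω * s + ψ₀)) (Real.sin (ω * s + ψ₀)) ∧
      flow2 (fun τ => (r₀ * Real.exp (α * τ)) •
          (ω • vec2 (-Real.sin (ω * τ + ψ₀)) (Real.cos (ω * τ + ψ₀)) +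
            α • vec2 (Real.cos (ω * τ + ψ₀)) (Real.sin (ω * τ + ψ₀)))) s 0 x₀ ≠ ℓ) ∧
    WeaklyPersistentAt2 ℓ
      (fun τ => (r₀ * Real.exp (α * τ)) •
        (ω • vec2 (-Real.sin (ω * τ + ψ₀)) (Real.cos (ω * τ + ψ₀)) +
          α • vec2 (Real.cos (ω * τ + ψ₀)) (Real.sin (ω * τ + ψ₀)))) x₀ ∧
    ∀ T > (0 : ℝ),
      Tendsto (fun t => ‖gram2 ℓ
        (fun τ => (r₀ * Real.exp (α * τ)) •
          (ω • vec2 (-Real.sin (ω * τ + ψ₀)) (Real.cos (ω * τ + ψ₀)) +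
            α • vec2 (Real.cos (ω * τ + ψ₀)) (Real.sin (ω * τ + ψ₀)))) x₀ t T‖)
        atTop (nhds 0) := by
  have hu : (fun τ => (r₀ * Real.exp (α * τ)) •
      (ω • vec2 (-Real.sin (ω * τ + ψ₀)) (Real.cos (ω * τ + ψ₀)) +
        α • vec2 (Real.cos (ω * τ + ψ₀)) (Real.sin (ω * τ + ψ₀)))) = uspi ω α r₀ ψ₀ := rfl
  rw [hu]
  refine ⟨?_, ?_, ?_⟩
  · intro s _
    constructor
    · rw [flow_uspi_x0 ℓ x₀ ω α r₀ ψ₀ hψ₀ s, spir_smul]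
    · rw [flow_uspi_x0 ℓ x₀ ω α r₀ ψ₀ hψ₀ s]
      intro h
      have hz : spir ω α r₀ ψ₀ s = 0 := by
        have := add_eq_left.mp h
        exact this
      have := norm_spir ω α r₀ ψ₀ hr₀pos s
      rw [hz, norm_zero] at this
      nlinarith [Real.exp_pos (α * s)]
  · refine ⟨1, one_pos, ?_⟩
    intro t ht
    have ha : (0:ℝ) ≤ t - 1 := by linarith
    have hab : t - 1 < t := by linarith
    have hcenter : flow2 (uspi ω α r₀ ψ₀) (t-1) 0 x₀ = ℓ + spir ω α r₀ ψ₀ (t-1) :=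
      flow_uspi_x0 ℓ x₀ ω α r₀ ψ₀ hψ₀ (t-1)
    refine ⟨r₀/2, by linarith, ?_⟩
    obtain ⟨κ, hκ, hbound⟩ := exists_kfun (ℓ + spir ω α r₀ ψ₀ (t-1)) (r₀/2) (by linarith)
      (fun p : Pt × Pt => cumError2 ℓ (uspi ω α r₀ ψ₀) (t-1) t p.1 p.2)
      (continuousOn_cum ℓ ω α r₀ ψ₀ hα hr₀pos ha hab.le)
      (fun p _ => intervalIntegral.integral_nonneg hab.le (fun s _ => by positivity))
      (fun p hp hne => by
        rw [Set.mem_prod] at hp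
        exact cum_pos ℓ ω α r₀ ψ₀ hω hα hr₀pos ha hab hp.1 hp.2 hne)
    refine ⟨κ, hκ, ?_⟩
    intro ξ₁ h₁ ξ₂ h₂
    rw [hcenter] at h₁ h₂
    exact hbound ξ₁ h₁ ξ₂ h₂
  · intro T hT
    exact part3 ℓ x₀ ω α r₀ ψ₀ hα hr₀pos hψ₀ T hT
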